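/- Let A be an associative unital ℂ-algebra of countable dimension, let G be a finite group acting on A by ℂ-algebra automorphisms, let M be a simple A-module, and let ψ : G → GL_ℂ(M) be a group homomorphism into the group of ℂ-linear bijections of M satisfying ψ(g)(a•m) = (g·a)•ψ(g)(m) for all g ∈ G, a ∈ A, m ∈ M. Then for every group homomorphism λ : G → ℂ^× the simultaneous eigenspace M^λ = {m ∈ M : ψ(g)m = λ(g)m for all g ∈ G} is either zero or a simple module over the fixed-point subalgebra A^G. -/

import Mathlib

open scoped Cardinal

/-- The fixed-point subalgebra `A^G` of a group `G` acting on a `ℂ`-algebra `A`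
by `ℂ`-algebra automorphisms. -/
def fixedSubalgebra {A : Type*} [Ring A] [Algebra ℂ A] {G : Type*} [Group G]
    (ρ : G →* (A ≃ₐ[ℂ] A)) : Subalgebra ℂ A where
  carrier := {a | ∀ g : G, ρ g a = a}
  mul_mem' := by
    intro x y hx hy g
    simp [map_mul, hx g, hy g]
  add_mem' := by
    intro x y hx hy g
    simp [map_add, hx g, hy g]
  algebraMap_mem' := by
    intro r g
    simp

/-- For a `G`-equivariant action `ψ : G → GL_ℂ(M)` on an `A`-module `M`
(equivariance `hψ : ψ(g)(a • m) = (g·a) • ψ(g)(m)`) and a group homomorphism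
`λ : G → ℂˣ`, the simultaneous eigenspace
`M^λ = {m ∈ M : ψ(g) m = λ(g) m for all g}`, which is a module over the fixed-point
subalgebra `A^G`. -/
def eigenspaceOfCharacter {A : Type*} [Ring A] [Algebra ℂ A] {G : Type*} [Group G]
    (ρ : G →* (A ≃ₐ[ℂ] A))
    {M : Type*} [AddCommGroup M] [Module ℂ M] [Module A M] [IsScalarTower ℂ A M]
    (ψ : G →* (M ≃ₗ[ℂ] M))
    (hψ : ∀ (g : G) (a : A) (m : M), ψ g (a • m) = (ρ g a) • ψ g m)
    (lam : G →* ℂˣ) : Submodule (fixedSubalgebra ρ) M where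
  carrier := {m | ∀ g : G, ψ g m = (lam g : ℂ) • m}
  add_mem' := by
    intro x y hx hy g
    simp [map_add, hx g, hy g, smul_add]
  zero_mem' := by simp
  smul_mem' := by
    rintro ⟨a, ha⟩ m hm g
    show ψ g (a • m) = (lam g : ℂ) • (a • m)
    rw [hψ g a m, ha g, hm g, smul_comm]

set_option synthInstance.maxHeartbeats 1000000 in
/-- Let `A` be a `ℂ`-algebra of countable dimension, `G` a finite group
acting on `A` by `ℂ`-algebra automorphisms, `M` a simple `A`-module, and
`ψ : G → GL_ℂ(M)` a group homomorphism with `ψ(g)(a • m) = (g·a) • ψ(g)(m)`.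
Then for every group homomorphism `λ : G → ℂˣ`, the eigenspace `M^λ` is either zero or
a simple module over the fixed-point subalgebra `A^G`. -/
theorem eigenspace_bot_or_simple_over_fixed_subalgebra
    {A : Type*} [Ring A] [Algebra ℂ A]
    (hA : Module.rank ℂ A ≤ ℵ₀)
    {G : Type*} [Group G] [Finite G] (ρ : G →* (A ≃ₐ[ℂ] A))
    {M : Type*} [AddCommGroup M] [Module ℂ M] [Module A M] [IsScalarTower ℂ A M]
    [IsSimpleModule A M]
    (ψ : G →* (M ≃ₗ[ℂ] M))
    (hψ : ∀ (g : G) (a : A) (m : M), ψ g (a • m) = (ρ g a) • ψ g m)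
    (lam : G →* ℂˣ) :
    eigenspaceOfCharacter ρ ψ hψ lam = ⊥ ∨
      IsSimpleModule (fixedSubalgebra ρ) (eigenspaceOfCharacter ρ ψ hψ lam) := by
  classical
  cases nonempty_fintype G
  by_cases hbot : eigenspaceOfCharacter ρ ψ hψ lam = ⊥
  · exact Or.inl hbot
  right
  set N := eigenspaceOfCharacter ρ ψ hψ lam with hNdef
  haveI : Nontrivial N := Submodule.nontrivial_iff_ne_bot.mpr hbot
  rw [isSimpleModule_iff]
  constructor
  intro P
  by_cases hP : P = ⊥
  · exact Or.inl hP
  right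
  obtain ⟨x, hxP, hx0⟩ := Submodule.exists_mem_ne_zero_of_ne_bot hP
  rw [Submodule.eq_top_iff']
  intro y
  have hx0' : (x : M) ≠ 0 := fun h => hx0 (Subtype.ext h)
  have hspan : Submodule.span A {(x : M)} = ⊤ := by
    rcases eq_bot_or_eq_top (Submodule.span A {(x : M)}) with h | h
    · exact absurd (h ▸ Submodule.mem_span_singleton_self (x : M)) (by simp [hx0'])
    · exact h
  obtain ⟨a, ha⟩ : ∃ a : A, a • (x : M) = (y : M) :=
    Submodule.mem_span_singleton.mp (hspan ▸ Submodule.mem_top)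
  have hxN : ∀ g : G, ψ g (x : M) = (lam g : ℂ) • (x : M) := x.2
  have hyN : ∀ g : G, ψ g (y : M) = (lam g : ℂ) • (y : M) := y.2
  have key : ∀ g : G, (ρ g a) • (x : M) = (y : M) := by
    intro g
    have h1 : ψ g (a • (x : M)) = (ρ g a) • ψ g (x : M) := hψ g a x
    rw [ha, hyN g, hxN g, smul_comm] at h1
    exact (smul_right_injective M (Units.ne_zero (lam g)) h1).symm
  set b : A := (Fintype.card G : ℂ)⁻¹ • ∑ g : G, ρ g a with hbdef
  have hbfix : b ∈ fixedSubalgebra ρ := by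
    intro h
    show ρ h b = b
    rw [hbdef, map_smul, map_sum]
    congr 1
    exact Fintype.sum_bijective (h * ·) (Group.mulLeft_bijective h)
      (fun g => ρ h (ρ g a)) (fun g => ρ g a)
      (fun g => by show ρ h (ρ g a) = ρ (h * g) a; rw [map_mul]; rfl)
  have hb : b • (x : M) = (y : M) := by
    rw [hbdef, smul_assoc, Finset.sum_smul]
    simp only [key, Finset.sum_const, Finset.card_univ, smul_smul,
      ← Nat.cast_smul_eq_nsmul ℂ]
    rw [inv_mul_cancel₀ (by exact_mod_cast Fintype.card_ne_zero), one_smul]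
  have hyx : y = (⟨b, hbfix⟩ : fixedSubalgebra ρ) • x := by
    apply Subtype.ext
    exact hb.symm
  rw [hyx]
  exact Submodule.smul_mem _ _ hxP
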